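/- Let p be a prime number, R a commutative ring of characteristic p, and η ∈ R[[x]] a formal power series. Define Δ : R[[x]] → R[[x]] by Δ(f) = ∂f − η·f, where ∂ is the formal derivative. Then the p-th iterate Δ^p of Δ is R[[x]]-linear: for all f, g ∈ R[[x]], Δ^p(f·g) = f·Δ^p(g). -/

import Mathlib

open PowerSeries

private lemma deriv_iterate_eq_zero (p : ℕ) (hp : p.Prime) (R : Type*) [CommRing R] [CharP R p]
    (f : PowerSeries R) : derivativeFun^[p] f = 0 := by
  have key : ∀ (k : ℕ) (f : PowerSeries R) (n : ℕ), coeff n (derivativeFun^[k] f) =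
      ((n+1).ascFactorial k : R) * coeff (n+k) f := by
    intro k
    induction k with
    | zero => intro f n; simp
    | succ k ih =>
      intro f n
      rw [Function.iterate_succ_apply, ih, show derivativeFun f = d⁄dX R f from rfl, coeff_derivative, Nat.ascFactorial_succ,
        show n + k + 1 = n + (k+1) by omega]
      push_cast
      ring
  ext n
  rw [key p f n, map_zero]
  have h : ((n+1).ascFactorial p : R) = 0 :=
    (CharP.cast_eq_zero_iff R p _).mpr
      ((Nat.dvd_factorial hp.pos le_rfl).trans (Nat.factorial_dvd_ascFactorial _ _))
  rw [h, zero_mul]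

/-- If `R` is a commutative ring of prime characteristic `p`, `η ∈ R[[x]]`, and
`Δ(f) = ∂f − η·f`, then the `p`-curvature `Δ^p` is `R[[x]]`-linear:
`Δ^p(f·g) = f·Δ^p(g)`. -/
theorem p_curvature_linear
    (p : ℕ) (hp : p.Prime) (R : Type*) [CommRing R] [CharP R p]
    (η : PowerSeries R) (Δ : PowerSeries R → PowerSeries R)
    (hΔ : ∀ f : PowerSeries R, Δ f = f.derivativeFun - η * f)
    (f g : PowerSeries R) :
    Δ^[p] (f * g) = f * Δ^[p] g := by
  haveI : Fact p.Prime := ⟨hp⟩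
  have hder := deriv_iterate_eq_zero p hp R f
  let D : Module.End R (PowerSeries R) :=
    ((d⁄dX R : Derivation R _ _) : PowerSeries R →ₗ[R] PowerSeries R) - LinearMap.mulLeft R η
  have hDapp : ∀ h : PowerSeries R, D h = h.derivativeFun - η * h := fun _ => rfl
  have hΔD : Δ = ⇑D := by funext h; rw [hΔ, hDapp]
  have step : ∀ u : PowerSeries R, D * LinearMap.mulLeft R u - LinearMap.mulLeft R u * D
      = LinearMap.mulLeft R u.derivativeFun := by
    intro u
    apply LinearMap.ext; intro h
    simp only [LinearMap.sub_apply, Module.End.mul_apply, LinearMap.mulLeft_apply, hDapp,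
      derivativeFun_mul, smul_eq_mul]
    ring
  haveI : CharP (Module.End R (PowerSeries R)) p := by
    refine charP_of_injective_algebraMap (R := R) (fun r s h => ?_) p
    have h1 := LinearMap.congr_fun h (1 : PowerSeries R)
    simp only [Module.algebraMap_end_apply, smul_eq_C_mul, mul_one] at h1
    simpa using congrArg (constantCoeff (R := R)) h1
  haveI : CharP (Module.End R (Module.End R (PowerSeries R))) p := by
    refine charP_of_injective_algebraMap (R := R) (fun r s h => ?_) p
    have h1 := LinearMap.congr_fun h (1 : Module.End R (PowerSeries R))
    have h2 := LinearMap.congr_fun h1 (1 : PowerSeries R)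
    simp only [Module.algebraMap_end_apply, LinearMap.smul_apply, Module.End.one_apply,
      smul_eq_C_mul, mul_one] at h2
    simpa using congrArg (constantCoeff (R := R)) h2
  have iter : ∀ (n : ℕ) (u : PowerSeries R),
      ((LinearMap.mulLeft R D - LinearMap.mulRight R D) ^ n) (LinearMap.mulLeft R u)
        = LinearMap.mulLeft R (derivativeFun^[n] u) := by
    intro n
    induction n with
    | zero => intro u; simp
    | succ n ih =>
      intro u
      rw [pow_succ', Module.End.mul_apply, ih, LinearMap.sub_apply, LinearMap.mulLeft_apply,
        LinearMap.mulRight_apply, step, Function.iterate_succ_apply']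
  have hc : Commute (S := Module.End R (Module.End R (PowerSeries R)))
      (LinearMap.mulLeft R D) (LinearMap.mulRight R D) :=
    LinearMap.commute_mulLeft_right D D
  have key := sub_pow_char_of_commute (R := Module.End R (Module.End R (PowerSeries R))) (p := p) hc
  have h2 := LinearMap.congr_fun key (LinearMap.mulLeft R f)
  rw [iter, hder, LinearMap.sub_apply, LinearMap.pow_mulLeft, LinearMap.pow_mulRight,
    LinearMap.mulLeft_apply, LinearMap.mulRight_apply] at h2
  have main2 : D ^ p * LinearMap.mulLeft R f = LinearMap.mulLeft R f * D ^ p := by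
    have : LinearMap.mulLeft R (0 : PowerSeries R)
        = (0 : Module.End R (PowerSeries R)) := by ext; simp
    rw [this] at h2
    exact sub_eq_zero.mp h2.symm
  have h3 := LinearMap.congr_fun main2 g
  simp only [Module.End.mul_apply, LinearMap.mulLeft_apply] at h3
  rw [hΔD, ← Module.End.pow_apply, ← Module.End.pow_apply]
  exact h3
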